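/- Let μ = (2/9)δ_{-3} + (4/9)δ_0 + (1/3)δ_2, let ρ = inf{n ≥ 0 : X_n ∉ (−1,2)} and τ = inf{n ≥ ρ : X_n ∉ (−3,0)}. Then τ < ∞ a.s., X_τ has law μ, the stopped process (X_{n∧τ})_{n≥0} is a uniformly integrable martingale, and the barycentre value Ψ_μ(0) = (Σ_{n≥0} n·μ({n}))/μ([0,∞)) equals 6/7 (in particular it is not an integer). -/

import Mathlib

open MeasureTheory ProbabilityTheory Filter Set
open scoped ENNReal NNReal Topology

noncomputable section

namespace RWSkorokhod

variable {Ω : Type*} [MeasurableSpace Ω]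

/-- The simple symmetric random walk `X n = ξ 1 + ⋯ + ξ n` built from the steps `ξ`. -/
def walk (ξ : ℕ → Ω → ℤ) (n : ℕ) (ω : Ω) : ℤ :=
  ∑ k ∈ Finset.Icc 1 n, ξ k ω

/-- `ξ` is a sequence of i.i.d. symmetric `±1` steps under the probability measure `P`. -/
structure IsSSRW (P : Measure Ω) (ξ : ℕ → Ω → ℤ) : Prop where
  isProb : IsProbabilityMeasure P
  meas : ∀ k, Measurable (ξ k)
  indep : iIndepFun ξ P
  up : ∀ k, P {ω | ξ k ω = 1} = 1 / 2
  down : ∀ k, P {ω | ξ k ω = -1} = 1 / 2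

lemma measurable_walk (ξ : ℕ → Ω → ℤ) (hm : ∀ k, Measurable (ξ k)) (n : ℕ) :
    Measurable (walk ξ n) :=
  Finset.measurable_sum _ fun k _ => hm k

/-- The natural filtration of the random walk: `F n = σ(X 0, …, X n)`. -/
def natFilt (ξ : ℕ → Ω → ℤ) (hm : ∀ k, Measurable (ξ k)) :
    Filtration ℕ ‹MeasurableSpace Ω› where
  seq n := ⨆ k ∈ Set.Iic n, MeasurableSpace.comap (walk ξ k) inferInstance
  mono' i _ hij := biSup_mono fun k (hk : k ∈ Set.Iic i) => le_trans hk hij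
  le' _ := iSup₂_le fun k _ => (measurable_walk ξ hm k).comap_le

/-- `τ` is an (extended-natural-number valued) stopping time for the filtration `F`. -/
def IsStop (F : Filtration ℕ ‹MeasurableSpace Ω›) (τ : Ω → ℕ∞) : Prop :=
  ∀ n : ℕ, MeasurableSet[F n] {ω | τ ω ≤ (n : ℕ∞)}

/-- `τ` is almost surely finite. -/
def AEFinite (P : Measure Ω) (τ : Ω → ℕ∞) : Prop :=
  ∀ᵐ ω ∂P, τ ω < ⊤

/-- The value `X_τ` of the walk at the stopping time `τ` (junk on `{τ = ∞}`). -/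
def stopVal (ξ : ℕ → Ω → ℤ) (τ : Ω → ℕ∞) (ω : Ω) : ℤ :=
  walk ξ (τ ω).toNat ω

/-- The stopped process `X_{n ∧ τ}`, viewed as a real-valued process. -/
def stopProc (ξ : ℕ → Ω → ℤ) (τ : Ω → ℕ∞) (n : ℕ) (ω : Ω) : ℝ :=
  ((walk ξ (min (n : ℕ∞) (τ ω)).toNat ω : ℤ) : ℝ)

/-- `τ` embeds the measure `μ` : the law of `X_τ` under `P` is `μ`. -/
def Embeds (P : Measure Ω) (ξ : ℕ → Ω → ℤ) (τ : Ω → ℕ∞) (μ : Measure ℤ) : Prop :=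
  Measure.map (stopVal ξ τ) P = μ

/-- `τ` is a UI stopping time: an a.s. finite stopping time of the natural filtration such
that the stopped process `(X_{n ∧ τ})` is a uniformly integrable martingale. -/
def IsUIStop (P : Measure Ω) (ξ : ℕ → Ω → ℤ) (hm : ∀ k, Measurable (ξ k))
    (τ : Ω → ℕ∞) : Prop :=
  IsStop (natFilt ξ hm) τ ∧ AEFinite P τ ∧
    Martingale (stopProc ξ τ) (natFilt ξ hm) P ∧
    UniformIntegrable (stopProc ξ τ) 1 P

/-- The set `M₀^UI` of probability measures on `ℤ` which can be embedded in the random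
walk by a UI stopping time of its natural filtration. -/
def MUI (P : Measure Ω) (ξ : ℕ → Ω → ℤ) (hm : ∀ k, Measurable (ξ k)) : Set (Measure ℤ) :=
  {μ | ∃ τ : Ω → ℕ∞, IsUIStop P ξ hm τ ∧ Embeds P ξ τ μ}

/-- A centered probability measure on `ℤ`: finite first moment and mean zero. -/
def Centered (μ : Measure ℤ) : Prop :=
  IsProbabilityMeasure μ ∧ Integrable (fun n : ℤ => (n : ℝ)) μ ∧
    (∫ n : ℤ, (n : ℝ) ∂μ) = 0

/-- `τ` is a minimal stopping time: any stopping time `σ ≤ τ` a.s. with `X_σ ∼ X_τ`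
equals `τ` a.s. -/
def Minimal (P : Measure Ω) (ξ : ℕ → Ω → ℤ) (hm : ∀ k, Measurable (ξ k))
    (τ : Ω → ℕ∞) : Prop :=
  ∀ σ : Ω → ℕ∞, IsStop (natFilt ξ hm) σ → (∀ᵐ ω ∂P, σ ω ≤ τ ω) →
    Measure.map (stopVal ξ σ) P = Measure.map (stopVal ξ τ) P → σ =ᵐ[P] τ

/-- The measure `μ_p = p δ₀ + ((1-p)/2)(δ₋₂ + δ₂)` on `ℤ`. -/
def muP (p : ℝ) : Measure ℤ :=
  ENNReal.ofReal p • Measure.dirac 0 +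
    ENNReal.ofReal ((1 - p) / 2) • (Measure.dirac (-2) + Measure.dirac 2)

/-- The set `S` of `p ∈ [0,1]` such that `μ_p` admits a UI embedding. -/
def Sset (P : Measure Ω) (ξ : ℕ → Ω → ℤ) (hm : ∀ k, Measurable (ξ k)) : Set ℝ :=
  {p | p ∈ Set.Icc (0 : ℝ) 1 ∧ muP p ∈ MUI P ξ hm}

/-- The exit time `H_N = inf {n : X n ∉ [-N, N]}`. -/
def exitTime (ξ : ℕ → Ω → ℤ) (N : ℕ) (ω : Ω) : ℕ∞ :=
  ⨅ (n : ℕ) (_ : walk ξ n ω ∉ Set.Icc (-(N : ℤ)) (N : ℤ)), (n : ℕ∞)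


set_option linter.unusedSectionVars false
set_option maxHeartbeats 1000000

section AuxRW

lemma etr {a b : ℝ≥0∞} (ha : a ≠ ⊤) (hb : b ≠ ⊤) (h : a.toReal = b.toReal) : a = b :=
  (ENNReal.toReal_eq_toReal_iff' ha hb).mp h

lemma dnt {a b : ℝ≥0∞} (ha : a ≠ ⊤) (hb : b ≠ 0) : a / b ≠ ⊤ :=
  (ENNReal.div_lt_top ha hb).ne

-- pattern
def pat (k : ℕ) : ℤ := if k % 2 = 1 then 1 else -1

lemma pat_pm (k : ℕ) : pat k = 1 ∨ pat k = -1 := by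
  unfold pat; split <;> simp

def eC (j k : ℕ) : ℤ := if k = j then -pat j else pat k

def eE (j r k : ℕ) : ℤ :=
  if k < j then pat k else if k = j then -pat j else
    if k = j + r then pat (k - j) else -pat (k - j)

lemma eC_pm (j k : ℕ) : eC j k = 1 ∨ eC j k = -1 := by
  unfold eC; rcases pat_pm j with h | h <;> rcases pat_pm k with h' | h' <;>
    split <;> simp [h, h']

lemma eE_pm (j r k : ℕ) : eE j r k = 1 ∨ eE j r k = -1 := by
  unfold eE
  rcases pat_pm j with h | h <;> rcases pat_pm k with h' | h' <;>
    rcases pat_pm (k - j) with h'' | h'' <;>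
    · repeat' split
      all_goals simp [h, h', h'']

/-- Cylinder event -/
def Cyl (ξ : ℕ → Ω → ℤ) (e : ℕ → ℤ) (n : ℕ) : Set Ω :=
  {ω | ∀ k ∈ Finset.Icc 1 n, ξ k ω = e k}

lemma Cyl_eq_iInter (ξ : ℕ → Ω → ℤ) (e : ℕ → ℤ) (n : ℕ) :
    Cyl ξ e n = ⋂ k ∈ Finset.Icc 1 n, ξ k ⁻¹' {e k} := by
  ext ω; simp [Cyl]

lemma Cyl_measurableSet {P : Measure Ω} {ξ : ℕ → Ω → ℤ} (W : IsSSRW P ξ)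
    (e : ℕ → ℤ) (n : ℕ) : MeasurableSet (Cyl ξ e n) := by
  rw [Cyl_eq_iInter]
  exact Finset.measurableSet_biInter _ fun k _ => (W.meas k) (measurableSet_singleton _)

lemma meas_step {P : Measure Ω} {ξ : ℕ → Ω → ℤ} (W : IsSSRW P ξ) {k : ℕ} {v : ℤ}
    (hv : v = 1 ∨ v = -1) : P (ξ k ⁻¹' {v}) = 1 / 2 := by
  rcases hv with h | h <;> subst h
  · have := W.up k; rw [← this]; rfl
  · have := W.down k; rw [← this]; rfl

lemma gsteps_pm {P : Measure Ω} {ξ : ℕ → Ω → ℤ} (W : IsSSRW P ξ) :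
    ∀ᵐ ω ∂P, ∀ k, ξ k ω = 1 ∨ ξ k ω = -1 := by
  haveI := W.isProb
  rw [ae_all_iff]
  intro k
  have hd : Disjoint (ξ k ⁻¹' {1}) (ξ k ⁻¹' {-1}) :=
    Disjoint.preimage _ (Set.disjoint_singleton.2 (by decide))
  have hu : P (ξ k ⁻¹' {1} ∪ ξ k ⁻¹' {-1}) = 1 := by
    rw [measure_union hd (W.meas _ (measurableSet_singleton _)),
      meas_step W (Or.inl rfl), meas_step W (Or.inr rfl)]
    exact ENNReal.add_halves 1
  rw [ae_iff]
  have h : {ω | ¬ (ξ k ω = 1 ∨ ξ k ω = -1)} = (ξ k ⁻¹' {1} ∪ ξ k ⁻¹' {-1})ᶜ := by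
    ext ω; simp [Set.mem_union, Set.mem_preimage]
  rw [h, measure_compl ((W.meas _ (measurableSet_singleton _)).union
    (W.meas _ (measurableSet_singleton _))) (by simp), hu]
  simp

lemma cyl_meas {P : Measure Ω} {ξ : ℕ → Ω → ℤ} (W : IsSSRW P ξ)
    {e : ℕ → ℤ} (he : ∀ k, e k = 1 ∨ e k = -1) (n : ℕ) :
    P (Cyl ξ e n) = (1 / 2 : ℝ≥0∞) ^ n := by
  rw [Cyl_eq_iInter]
  rw [W.indep.measure_inter_preimage_eq_mul (Finset.Icc 1 n)
    (sets := fun k => {e k}) (fun i _ => measurableSet_singleton _)]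
  rw [Finset.prod_congr rfl (fun i _ => meas_step W (he i))]
  simp [Nat.card_Icc]


lemma walk_zero (ξ : ℕ → Ω → ℤ) (ω : Ω) : walk ξ 0 ω = 0 := by simp [walk]

lemma walk_succ (ξ : ℕ → Ω → ℤ) (n : ℕ) (ω : Ω) :
    walk ξ (n + 1) ω = walk ξ n ω + ξ (n + 1) ω := by
  unfold walk; rw [Finset.sum_Icc_succ_top (by omega)]

lemma walk_of_pat {ξ : ℕ → Ω → ℤ} {ω : Ω} {m : ℕ}
    (h : ∀ k, 1 ≤ k → k ≤ m → ξ k ω = pat k) :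
    ∀ i, i ≤ m → walk ξ i ω = if i % 2 = 1 then 1 else 0 := by
  intro i him
  induction i with
  | zero => simp [walk_zero]
  | succ i ih =>
    rw [walk_succ, ih (by omega), h (i + 1) (by omega) him]
    rcases Nat.mod_two_eq_zero_or_one i with h2 | h2
    · have h3 : (i + 1) % 2 = 1 := by omega
      simp [pat, h2, h3]
    · have h3 : (i + 1) % 2 = 0 := by omega
      have h4 : ¬ ((i + 1) % 2 = 1) := by omega
      simp [pat, h2, h3, h4]

lemma walk_of_pat2 {ξ : ℕ → Ω → ℤ} {ω : Ω} {j t : ℕ} (hwj : walk ξ j ω = -1)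
    (h : ∀ s, 1 ≤ s → s ≤ t → ξ (j + s) ω = -pat s) :
    ∀ s, s ≤ t → walk ξ (j + s) ω = if s % 2 = 1 then -2 else -1 := by
  intro s hst
  induction s with
  | zero => simpa using hwj
  | succ s ih =>
    rw [show j + (s + 1) = (j + s) + 1 by omega, walk_succ, ih (by omega),
      show j + s + 1 = j + (s + 1) by omega, h (s + 1) (by omega) hst]
    rcases Nat.mod_two_eq_zero_or_one s with h2 | h2
    · have h3 : (s + 1) % 2 = 1 := by omega
      simp [pat, h2, h3]
    · have h3 : (s + 1) % 2 = 0 := by omega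
      have h4 : ¬ ((s + 1) % 2 = 1) := by omega
      simp [pat, h2, h3, h4]

lemma iInf_eq_coe {p : ℕ → Prop} {j : ℕ} (hpj : p j) (hmin : ∀ n, p n → j ≤ n) :
    (⨅ (n : ℕ) (_ : p n), (n : ℕ∞)) = (j : ℕ∞) :=
  le_antisymm (iInf₂_le j hpj) (le_iInf₂ fun n hn => by exact_mod_cast hmin n hn)

lemma iInf_le_coe_iff {p : ℕ → Prop} {j : ℕ} :
    (⨅ (n : ℕ) (_ : p n), (n : ℕ∞)) ≤ (j : ℕ∞) ↔ ∃ n, p n ∧ n ≤ j := by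
  constructor
  · intro h
    by_contra hc
    push_neg at hc
    have h2 : ((j + 1 : ℕ) : ℕ∞) ≤ ⨅ (n : ℕ) (_ : p n), (n : ℕ∞) :=
      le_iInf₂ fun n hn => by exact_mod_cast hc n hn
    have := le_trans h2 h
    exact absurd (by exact_mod_cast this) (by omega)
  · rintro ⟨n, hn, hnj⟩
    exact le_trans (iInf₂_le n hn) (by exact_mod_cast hnj)

lemma toNat_min_coe (n j : ℕ) : ((n : ℕ∞) ⊓ (j : ℕ∞)).toNat = min n j := by
  rcases le_total n j with h | h
  · rw [inf_eq_left.2 (by exact_mod_cast h : (n : ℕ∞) ≤ (j : ℕ∞))]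
    simp [min_eq_left h]
  · rw [inf_eq_right.2 (by exact_mod_cast h : (j : ℕ∞) ≤ (n : ℕ∞))]
    simp [min_eq_right h]

section Path

variable {ξ : ℕ → Ω → ℤ} {ρ τ : Ω → ℕ∞}

/-- walk values on a `C`-cylinder. -/
lemma walkC {j : ℕ} (hj2 : 2 ≤ j) (hje : j % 2 = 0) {ω : Ω}
    (hω : ω ∈ Cyl ξ (eC j) j) :
    (∀ i, i < j → walk ξ i ω = if i % 2 = 1 then 1 else 0) ∧ walk ξ j ω = 2 := by
  have hpat : ∀ k, 1 ≤ k → k ≤ j - 1 → ξ k ω = pat k := by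
    intro k h1 h2
    have := hω k (by simp [Finset.mem_Icc]; omega)
    rwa [eC, if_neg (by omega)] at this
  have hA : ∀ i, i < j → walk ξ i ω = if i % 2 = 1 then 1 else 0 :=
    fun i hi => walk_of_pat hpat i (by omega)
  refine ⟨hA, ?_⟩
  have hj1 : j = (j - 1) + 1 := by omega
  rw [hj1, walk_succ, hA (j - 1) (by omega)]
  have hxj : ξ ((j - 1) + 1) ω = -pat j := by
    have := hω j (by simp [Finset.mem_Icc]; omega)
    rw [eC, if_pos rfl] at this
    rw [← hj1]; exact this
  rw [hxj]
  have h1 : (j - 1) % 2 = 1 := by omega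
  simp [pat, h1, hje, show ¬ (j % 2 = 1) by omega]

/-- walk values on an `E`-cylinder. -/
lemma walkE {j r : ℕ} (hjo : j % 2 = 1) (hr : 1 ≤ r) {ω : Ω}
    (hω : ω ∈ Cyl ξ (eE j r) (j + r)) :
    (∀ i, i < j → walk ξ i ω = if i % 2 = 1 then 1 else 0) ∧
    (∀ s, s < r → walk ξ (j + s) ω = if s % 2 = 1 then -2 else -1) ∧
    walk ξ (j + r) ω = if r % 2 = 1 then 0 else -3 := by
  have hpat : ∀ k, 1 ≤ k → k ≤ j - 1 → ξ k ω = pat k := by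
    intro k h1 h2
    have := hω k (by simp [Finset.mem_Icc]; omega)
    rwa [eE, if_pos (by omega)] at this
  have hA : ∀ i, i < j → walk ξ i ω = if i % 2 = 1 then 1 else 0 :=
    fun i hi => walk_of_pat hpat i (by omega)
  have hwj : walk ξ j ω = -1 := by
    have hj1 : j = (j - 1) + 1 := by omega
    rw [hj1, walk_succ, hA (j - 1) (by omega)]
    have hxj : ξ ((j - 1) + 1) ω = -pat j := by
      have := hω j (by simp [Finset.mem_Icc]; omega)
      rw [eE, if_neg (by omega), if_pos rfl] at this
      rw [← hj1]; exact this
    rw [hxj]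
    have h1 : ¬ ((j - 1) % 2 = 1) := by omega
    simp [pat, h1, hjo]
  have hpat2 : ∀ s, 1 ≤ s → s ≤ r - 1 → ξ (j + s) ω = -pat s := by
    intro s h1 h2
    have := hω (j + s) (by simp [Finset.mem_Icc]; omega)
    rw [eE, if_neg (by omega), if_neg (by omega), if_neg (by omega)] at this
    simpa using this
  have hB : ∀ s, s < r → walk ξ (j + s) ω = if s % 2 = 1 then -2 else -1 :=
    fun s hs => walk_of_pat2 hwj hpat2 s (by omega)
  refine ⟨hA, hB, ?_⟩
  have hr1 : j + r = (j + (r - 1)) + 1 := by omega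
  rw [hr1, walk_succ, hB (r - 1) (by omega)]
  have hxr : ξ ((j + (r - 1)) + 1) ω = pat r := by
    have := hω (j + r) (by simp [Finset.mem_Icc]; omega)
    rw [eE, if_neg (by omega), if_neg (by omega), if_pos rfl] at this
    simpa [← hr1, show j + r - j = r by omega] using this
  rw [hxr]
  rcases Nat.mod_two_eq_zero_or_one r with h2 | h2
  · have h3 : (r - 1) % 2 = 1 := by omega
    simp [pat, h2, h3, show ¬ (r % 2 = 1) by omega]
  · have h3 : ¬ ((r - 1) % 2 = 1) := by omega
    simp [pat, h2, h3]


variable (hρ : ρ = fun ω => ⨅ (n : ℕ) (_ : walk ξ n ω ∉ Set.Ioo (-1 : ℤ) 2), (n : ℕ∞))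
    (hτ : τ = fun ω => ⨅ (n : ℕ)
      (_ : ρ ω ≤ (n : ℕ∞) ∧ walk ξ n ω ∉ Set.Ioo (-3 : ℤ) 0), (n : ℕ∞))

include hρ hτ

lemma tauC {j : ℕ} (hj2 : 2 ≤ j) (hje : j % 2 = 0) {ω : Ω}
    (hω : ω ∈ Cyl ξ (eC j) j) :
    τ ω = (j : ℕ∞) ∧ stopVal ξ τ ω = 2 ∧
      (∀ n : ℕ, -3 ≤ walk ξ (min (n : ℕ∞) (τ ω)).toNat ω ∧
        walk ξ (min (n : ℕ∞) (τ ω)).toNat ω ≤ 3) := by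
  obtain ⟨hA, hB⟩ := walkC hj2 hje hω
  have hρω : ρ ω = (j : ℕ∞) := by
    rw [hρ]
    refine iInf_eq_coe ?_ ?_
    · rw [hB]; simp
    · intro n hn
      by_contra hc
      push_neg at hc
      exact hn (by rw [hA n hc]; split <;> simp [Set.mem_Ioo] <;> omega)
  have hτω : τ ω = (j : ℕ∞) := by
    rw [hτ]
    refine iInf_eq_coe ⟨by rw [hρω], by rw [hB]; simp⟩ ?_
    · rintro n ⟨h1, _⟩
      rw [hρω] at h1
      exact_mod_cast h1
  have hval : ∀ i, i ≤ j → -3 ≤ walk ξ i ω ∧ walk ξ i ω ≤ 3 := by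
    intro i hi
    rcases Nat.lt_or_ge i j with h | h
    · rw [hA i h]; split <;> omega
    · have : i = j := by omega
      rw [this, hB]; omega
  refine ⟨hτω, ?_, ?_⟩
  · rw [stopVal, hτω]; simpa using hB
  · intro n
    rw [hτω]
    rw [show min (n : ℕ∞) (j : ℕ∞) = (n : ℕ∞) ⊓ (j : ℕ∞) from rfl, toNat_min_coe]
    exact hval _ (by omega)

lemma tauE {j r : ℕ} (hjo : j % 2 = 1) (hr : 1 ≤ r) {ω : Ω}
    (hω : ω ∈ Cyl ξ (eE j r) (j + r)) :
    τ ω = ((j + r : ℕ) : ℕ∞) ∧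
      stopVal ξ τ ω = (if r % 2 = 1 then 0 else -3) ∧
      (∀ n : ℕ, -3 ≤ walk ξ (min (n : ℕ∞) (τ ω)).toNat ω ∧
        walk ξ (min (n : ℕ∞) (τ ω)).toNat ω ≤ 3) := by
  obtain ⟨hA, hB, hC⟩ := walkE hjo hr hω
  have hρω : ρ ω = (j : ℕ∞) := by
    rw [hρ]
    refine iInf_eq_coe ?_ ?_
    · have := hB 0 (by omega)
      simp only [Nat.add_zero] at this
      rw [this]; simp
    · intro n hn
      by_contra hc
      push_neg at hc
      exact hn (by rw [hA n hc]; split <;> simp [Set.mem_Ioo] <;> omega)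
  have hτω : τ ω = ((j + r : ℕ) : ℕ∞) := by
    rw [hτ]
    refine iInf_eq_coe ⟨by rw [hρω]; exact_mod_cast Nat.le_add_right j r,
      by rw [hC]; split <;> simp⟩ ?_
    rintro n ⟨h1, h2⟩
    rw [hρω] at h1
    have hjn : j ≤ n := by exact_mod_cast h1
    by_contra hc
    push_neg at hc
    have hs : n - j < r := by omega
    have := hB (n - j) hs
    rw [show j + (n - j) = n by omega] at this
    exact h2 (by rw [this]; split <;> simp [Set.mem_Ioo] <;> omega)
  have hval : ∀ i, i ≤ j + r → -3 ≤ walk ξ i ω ∧ walk ξ i ω ≤ 3 := by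
    intro i hi
    rcases Nat.lt_or_ge i j with h | h
    · rw [hA i h]; split <;> omega
    · rcases Nat.lt_or_ge i (j + r) with h' | h'
      · have := hB (i - j) (by omega)
        rw [show j + (i - j) = i by omega] at this
        rw [this]; split <;> omega
      · have : i = j + r := by omega
        rw [this, hC]; split <;> omega
  refine ⟨hτω, ?_, ?_⟩
  · rw [stopVal, hτω, ENat.toNat_coe]; exact hC
  · intro n
    rw [hτω]
    rw [show min (n : ℕ∞) ((j + r : ℕ) : ℕ∞) = (n : ℕ∞) ⊓ ((j + r : ℕ) : ℕ∞) from rfl,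
      toNat_min_coe]
    exact hval _ (by omega)

end Path

section Events

variable {P : Measure Ω} {ξ : ℕ → Ω → ℤ}

lemma neg_pat_ne (k : ℕ) : -pat k ≠ pat k := by
  rcases pat_pm k with h | h <;> rw [h] <;> decide

lemma cyl_disj {e e' : ℕ → ℤ} {n n' k : ℕ} (h2 : k ≤ n) (h3 : k ≤ n')
    (h1 : 1 ≤ k) (hne : e k ≠ e' k) : Disjoint (Cyl ξ e n) (Cyl ξ e' n') := by
  rw [Set.disjoint_left]
  intro ω h h'
  exact hne ((h k (by simp [Finset.mem_Icc]; omega)).symm.trans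
    (h' k (by simp [Finset.mem_Icc]; omega)))

lemma eC_self (j : ℕ) : eC j j = -pat j := if_pos rfl
lemma eC_ne {j k : ℕ} (h : k ≠ j) : eC j k = pat k := if_neg h
lemma eE_lt {j r k : ℕ} (h : k < j) : eE j r k = pat k := if_pos h
lemma eE_self (j r : ℕ) : eE j r j = -pat j := by
  rw [eE, if_neg (lt_irrefl j), if_pos rfl]
lemma eE_end {j r : ℕ} (hr : 1 ≤ r) : eE j r (j + r) = pat r := by
  rw [eE, if_neg (by omega), if_neg (by omega), if_pos rfl]
  congr 1; omega
lemma eE_mid {j r k : ℕ} (h : j < k) (h2 : k ≠ j + r) : eE j r k = -pat (k - j) := by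
  rw [eE, if_neg (by omega), if_neg (by omega), if_neg h2]

/-- C vs C cylinders disjoint. -/
lemma disjCC {j j' : ℕ} (hj : 2 ≤ j) (hj' : 2 ≤ j') (hne : j ≠ j') :
    Disjoint (Cyl ξ (eC j) j) (Cyl ξ (eC j') j') := by
  rcases Nat.lt_or_ge j j' with h | h
  · exact cyl_disj le_rfl (by omega) (by omega)
      (by rw [eC_self, eC_ne (by omega)]; exact neg_pat_ne j)
  · exact (cyl_disj le_rfl (by omega) (by omega)
      (by rw [eC_self, eC_ne (by omega)]; exact neg_pat_ne j')).symm

/-- C vs E cylinders disjoint (different parities of start). -/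
lemma disjCE {j j' r' : ℕ} (hj : 2 ≤ j) (hje : j % 2 = 0) (hj' : j' % 2 = 1)
    (hr' : 1 ≤ r') : Disjoint (Cyl ξ (eC j) j) (Cyl ξ (eE j' r') (j' + r')) := by
  rcases Nat.lt_or_ge j j' with h | h
  · exact cyl_disj le_rfl (by omega) (by omega)
      (by rw [eC_self, eE_lt h]; exact neg_pat_ne j)
  · have h' : j' < j := by omega
    exact cyl_disj (k := j') (by omega) (by omega) (by omega)
      (by rw [eC_ne (by omega), eE_self]; exact (neg_pat_ne j').symm)

/-- E vs E cylinders disjoint. -/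
lemma disjEE {j r j' r' : ℕ} (hj : j % 2 = 1) (hj' : j' % 2 = 1)
    (hr : 1 ≤ r) (hr' : 1 ≤ r') (hne : j ≠ j' ∨ r ≠ r') :
    Disjoint (Cyl ξ (eE j r) (j + r)) (Cyl ξ (eE j' r') (j' + r')) := by
  rcases Nat.lt_trichotomy j j' with h | h | h
  · exact cyl_disj (k := j) (by omega) (by omega) (by omega)
      (by rw [eE_self, eE_lt h]; exact neg_pat_ne j)
  · subst h
    have hrr : r ≠ r' := by tauto
    rcases Nat.lt_or_ge r r' with h2 | h2
    · refine cyl_disj (k := j + r) le_rfl (by omega) (by omega) ?_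
      rw [eE_end hr, eE_mid (by omega) (by omega), show j + r - j = r by omega]
      exact (neg_pat_ne r).symm
    · refine cyl_disj (k := j + r') (by omega) le_rfl (by omega) ?_
      rw [eE_end hr', eE_mid (by omega) (by omega), show j + r' - j = r' by omega]
      exact neg_pat_ne r'
  · exact cyl_disj (k := j') (by omega) (by omega) (by omega)
      (by rw [eE_self, eE_lt h]; exact (neg_pat_ne j').symm)

/-- The three unions. -/
def U2Set (ξ : ℕ → Ω → ℤ) : Set Ω := ⋃ m : ℕ, Cyl ξ (eC (2 * m + 2)) (2 * m + 2)
def U0Set (ξ : ℕ → Ω → ℤ) : Set Ω :=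
  ⋃ q : ℕ × ℕ, Cyl ξ (eE (2 * q.1 + 1) (2 * q.2 + 1)) (2 * q.1 + 1 + (2 * q.2 + 1))
def U3Set (ξ : ℕ → Ω → ℤ) : Set Ω :=
  ⋃ q : ℕ × ℕ, Cyl ξ (eE (2 * q.1 + 1) (2 * q.2 + 2)) (2 * q.1 + 1 + (2 * q.2 + 2))

lemma U2_meas (W : IsSSRW P ξ) : MeasurableSet (U2Set ξ) :=
  MeasurableSet.iUnion fun m => Cyl_measurableSet W _ _
lemma U0_meas (W : IsSSRW P ξ) : MeasurableSet (U0Set ξ) :=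
  MeasurableSet.iUnion fun q => Cyl_measurableSet W _ _
lemma U3_meas (W : IsSSRW P ξ) : MeasurableSet (U3Set ξ) :=
  MeasurableSet.iUnion fun q => Cyl_measurableSet W _ _

lemma disj_U2_U0 : Disjoint (U2Set ξ) (U0Set ξ) := by
  refine Set.disjoint_iUnion_left.2 fun m => Set.disjoint_iUnion_right.2 fun q => ?_
  exact disjCE (by omega) (by omega) (by omega) (by omega)

lemma disj_U2_U3 : Disjoint (U2Set ξ) (U3Set ξ) := by
  refine Set.disjoint_iUnion_left.2 fun m => Set.disjoint_iUnion_right.2 fun q => ?_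
  exact disjCE (by omega) (by omega) (by omega) (by omega)

lemma disj_U0_U3 : Disjoint (U0Set ξ) (U3Set ξ) := by
  refine Set.disjoint_iUnion_left.2 fun q => Set.disjoint_iUnion_right.2 fun q' => ?_
  exact disjEE (by omega) (by omega) (by omega) (by omega) (by omega)

-- geometric sums
lemma half_sq : (1 / 2 : ℝ≥0∞) ^ 2 = 1 / 4 := by
  apply etr (by simp [dnt, ENNReal.pow_ne_top]) (dnt (by norm_num) (by norm_num))
  rw [ENNReal.toReal_pow]
  simp [ENNReal.toReal_div] <;> norm_num

lemma sum_quarter : ∑' a : ℕ, (1 / 4 : ℝ≥0∞) ^ a = 4 / 3 := by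
  rw [ENNReal.tsum_geometric]
  rw [show (1 - 1 / 4 : ℝ≥0∞) = 3 / 4 by
    apply etr (by simp) (dnt (by norm_num) (by norm_num))
    rw [ENNReal.toReal_sub_of_le (by norm_num) (by norm_num)]
    simp [ENNReal.toReal_div] <;> norm_num]
  apply etr (by simp) (dnt (by norm_num) (by norm_num))
  rw [ENNReal.toReal_inv]
  simp [ENNReal.toReal_div] <;> norm_num

lemma sum_even : ∑' a : ℕ, (1 / 2 : ℝ≥0∞) ^ (2 * a + 2) = 1 / 3 := by
  have h : ∀ a : ℕ, (1 / 2 : ℝ≥0∞) ^ (2 * a + 2) = (1 / 4) * (1 / 4) ^ a := by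
    intro a
    rw [show 2 * a + 2 = 2 * (a + 1) by ring, pow_mul, half_sq, pow_succ, mul_comm]
  simp only [h]
  rw [ENNReal.tsum_mul_left, sum_quarter]
  apply etr (ENNReal.mul_ne_top (dnt (by norm_num) (by norm_num))
    (dnt (by norm_num) (by norm_num))) (dnt (by norm_num) (by norm_num))
  rw [ENNReal.toReal_mul]
  simp [ENNReal.toReal_div] <;> norm_num

lemma sum_odd : ∑' a : ℕ, (1 / 2 : ℝ≥0∞) ^ (2 * a + 1) = 2 / 3 := by
  have h : ∀ a : ℕ, (1 / 2 : ℝ≥0∞) ^ (2 * a + 1) = (1 / 2) * (1 / 4) ^ a := by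
    intro a
    rw [pow_succ, pow_mul, half_sq, mul_comm]
  simp only [h]
  rw [ENNReal.tsum_mul_left, sum_quarter]
  apply etr (ENNReal.mul_ne_top (dnt (by norm_num) (by norm_num))
    (dnt (by norm_num) (by norm_num))) (dnt (by norm_num) (by norm_num))
  rw [ENNReal.toReal_mul]
  simp [ENNReal.toReal_div] <;> norm_num

lemma U2_measure (W : IsSSRW P ξ) : P (U2Set ξ) = 1 / 3 := by
  rw [U2Set, measure_iUnion (fun m m' hmm' => disjCC (by omega) (by omega) (by omega))
    (fun m => Cyl_measurableSet W _ _)]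
  rw [tsum_congr (fun m => cyl_meas W (fun k => eC_pm _ k) _)]
  exact sum_even

lemma U0_measure (W : IsSSRW P ξ) : P (U0Set ξ) = 4 / 9 := by
  rw [U0Set, measure_iUnion ?_ (fun q => Cyl_measurableSet W _ _)]
  · rw [tsum_congr (fun q => cyl_meas W (fun k => eE_pm _ _ k) _)]
    rw [ENNReal.tsum_prod (f := fun a b => ((1 : ℝ≥0∞) / 2) ^ (2 * a + 1 + (2 * b + 1)))]
    have h : ∀ a b : ℕ,
        (1 / 2 : ℝ≥0∞) ^ (2 * a + 1 + (2 * b + 1)) =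
          (1 / 2) ^ (2 * a + 1) * (1 / 2) ^ (2 * b + 1) := fun a b => pow_add _ _ _
    simp only [h]
    rw [tsum_congr (fun a => ENNReal.tsum_mul_left), ENNReal.tsum_mul_right, sum_odd]
    apply etr (ENNReal.mul_ne_top (dnt (by norm_num) (by norm_num))
      (dnt (by norm_num) (by norm_num))) (dnt (by norm_num) (by norm_num))
    rw [ENNReal.toReal_mul]
    simp [ENNReal.toReal_div] <;> norm_num
  · intro q q' hne
    refine disjEE (by omega) (by omega) (by omega) (by omega) ?_
    rcases Prod.mk.injEq .. ▸ (fun h => hne (Prod.ext_iff.2 h)) with h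
    by_contra hc
    push_neg at hc
    exact hne (Prod.ext_iff.2 ⟨by omega, by omega⟩)

lemma U3_measure (W : IsSSRW P ξ) : P (U3Set ξ) = 2 / 9 := by
  rw [U3Set, measure_iUnion ?_ (fun q => Cyl_measurableSet W _ _)]
  · rw [tsum_congr (fun q => cyl_meas W (fun k => eE_pm _ _ k) _)]
    rw [ENNReal.tsum_prod (f := fun a b => ((1 : ℝ≥0∞) / 2) ^ (2 * a + 1 + (2 * b + 2)))]
    have h : ∀ a b : ℕ,
        (1 / 2 : ℝ≥0∞) ^ (2 * a + 1 + (2 * b + 2)) =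
          (1 / 2) ^ (2 * a + 1) * (1 / 2) ^ (2 * b + 2) := fun a b => pow_add _ _ _
    simp only [h]
    rw [tsum_congr (fun a => ENNReal.tsum_mul_left), ENNReal.tsum_mul_right, sum_odd, sum_even]
    apply etr (ENNReal.mul_ne_top (dnt (by norm_num) (by norm_num))
      (dnt (by norm_num) (by norm_num))) (dnt (by norm_num) (by norm_num))
    rw [ENNReal.toReal_mul]
    simp [ENNReal.toReal_div] <;> norm_num
  · intro q q' hne
    refine disjEE (by omega) (by omega) (by omega) (by omega) ?_
    by_contra hc
    push_neg at hc
    exact hne (Prod.ext_iff.2 ⟨by omega, by omega⟩)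

def USet (ξ : ℕ → Ω → ℤ) : Set Ω := U2Set ξ ∪ U0Set ξ ∪ U3Set ξ

lemma U_meas (W : IsSSRW P ξ) : MeasurableSet (USet ξ) :=
  ((U2_meas W).union (U0_meas W)).union (U3_meas W)

lemma U_measure (W : IsSSRW P ξ) : P (USet ξ) = 1 := by
  rw [USet, measure_union (disjoint_union_left.2 ⟨disj_U2_U3, disj_U0_U3⟩) (U3_meas W),
    measure_union disj_U2_U0 (U0_meas W), U2_measure W, U0_measure W, U3_measure W]
  apply etr (by simp [ENNReal.add_ne_top, dnt]) (by simp)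
  rw [ENNReal.toReal_add (by simp [ENNReal.add_ne_top, dnt]) (dnt (by norm_num) (by norm_num)),
    ENNReal.toReal_add (dnt (by norm_num) (by norm_num)) (dnt (by norm_num) (by norm_num))]
  simp [ENNReal.toReal_div] <;> norm_num

lemma Ucompl_null (W : IsSSRW P ξ) : P (USet ξ)ᶜ = 0 := by
  haveI := W.isProb
  rw [measure_compl (U_meas W) (by simp), U_measure W]
  simp

end Events

section Filt

variable {P : Measure Ω} {ξ : ℕ → Ω → ℤ}

variable {hm : ∀ k, Measurable (ξ k)}

lemma walk_meas_filt {k n : ℕ} (hk : k ≤ n) :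
    Measurable[natFilt ξ hm n] (walk ξ k) := by
  have h : MeasurableSpace.comap (walk ξ k) inferInstance ≤ natFilt ξ hm n := by
    refine le_trans ?_ (le_refl (natFilt ξ hm n))
    exact le_biSup (fun k => MeasurableSpace.comap (walk ξ k) inferInstance) hk
  exact fun s hs => h _ ⟨s, hs, rfl⟩

lemma walk_preim_meas_filt {k n : ℕ} (hk : k ≤ n) (s : Set ℤ) :
    MeasurableSet[natFilt ξ hm n] (walk ξ k ⁻¹' s) :=
  walk_meas_filt hk (by trivial)

lemma xi_meas_filt {k n : ℕ} (hk1 : 1 ≤ k) (hk : k ≤ n) :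
    Measurable[natFilt ξ hm n] (ξ k) := by
  have h : ξ k = fun ω => walk ξ k ω - walk ξ (k - 1) ω := by
    funext ω
    have h2 := walk_succ ξ (k - 1) ω
    rw [show k - 1 + 1 = k by omega] at h2
    rw [h2]
    ring
  rw [h]
  exact (walk_meas_filt hk).sub (walk_meas_filt (by omega))

variable {ρ τ : Ω → ℕ∞}
variable (hρ : ρ = fun ω => ⨅ (n : ℕ) (_ : walk ξ n ω ∉ Set.Ioo (-1 : ℤ) 2), (n : ℕ∞))
    (hτ : τ = fun ω => ⨅ (n : ℕ)
      (_ : ρ ω ≤ (n : ℕ∞) ∧ walk ξ n ω ∉ Set.Ioo (-3 : ℤ) 0), (n : ℕ∞))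

include hρ in
lemma rho_le_meas {k n : ℕ} (hk : k ≤ n) :
    MeasurableSet[natFilt ξ hm n] {ω | ρ ω ≤ (k : ℕ∞)} := by
  have h : {ω | ρ ω ≤ (k : ℕ∞)} =
      ⋃ (m : ℕ) (_ : m ≤ k), walk ξ m ⁻¹' (Set.Ioo (-1 : ℤ) 2)ᶜ := by
    ext ω
    rw [Set.mem_setOf_eq, hρ]
    rw [iInf_le_coe_iff]
    simp only [Set.mem_iUnion, Set.mem_preimage, Set.mem_compl_iff]
    constructor
    · rintro ⟨m, h1, h2⟩; exact ⟨m, h2, h1⟩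
    · rintro ⟨m, h1, h2⟩; exact ⟨m, h2, h1⟩
  rw [h]
  exact MeasurableSet.iUnion fun m => MeasurableSet.iUnion fun hm' =>
    walk_preim_meas_filt (by omega) _

include hρ hτ in
lemma tau_le_meas {k n : ℕ} (hk : k ≤ n) :
    MeasurableSet[natFilt ξ hm n] {ω | τ ω ≤ (k : ℕ∞)} := by
  have h : {ω | τ ω ≤ (k : ℕ∞)} =
      ⋃ (m : ℕ) (_ : m ≤ k),
        ({ω | ρ ω ≤ (m : ℕ∞)} ∩ walk ξ m ⁻¹' (Set.Ioo (-3 : ℤ) 0)ᶜ) := by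
    ext ω
    rw [Set.mem_setOf_eq, hτ]
    rw [iInf_le_coe_iff]
    simp only [Set.mem_iUnion, Set.mem_inter_iff, Set.mem_setOf_eq, Set.mem_preimage,
      Set.mem_compl_iff]
    constructor
    · rintro ⟨m, ⟨h1, h2⟩, h3⟩; exact ⟨m, h3, h1, h2⟩
    · rintro ⟨m, h3, h1, h2⟩; exact ⟨m, ⟨h1, h2⟩, h3⟩
  rw [h]
  exact MeasurableSet.iUnion fun m => MeasurableSet.iUnion fun hm' =>
    ((rho_le_meas hρ (by omega)).inter (walk_preim_meas_filt (by omega) _))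

include hm hρ hτ in
lemma tau_le_meas_amb (k : ℕ) : MeasurableSet {ω | τ ω ≤ (k : ℕ∞)} :=
  (natFilt ξ hm).le k _ (tau_le_meas hρ hτ le_rfl)

include hm hρ hτ in
lemma tau_eq_top_meas : MeasurableSet {ω | τ ω = ⊤} := by
  have h : {ω | τ ω = ⊤} = ⋂ (k : ℕ), {ω | τ ω ≤ (k : ℕ∞)}ᶜ := by
    ext ω
    simp only [Set.mem_setOf_eq, Set.mem_iInter, Set.mem_compl_iff]
    constructor
    · intro h k hk
      rw [h] at hk
      exact absurd hk (by simp)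
    · intro h
      by_contra hc
      rcases WithTop.ne_top_iff_exists.1 hc with ⟨t, ht⟩
      exact h t (by rw [← ht]; exact le_rfl)
  rw [h]
  exact MeasurableSet.iInter fun k => (tau_le_meas_amb (hm := hm) hρ hτ k).compl

lemma enat_eq_coe_iff (x : ℕ∞) (n : ℕ) :
    x = (n : ℕ∞) ↔ x ≤ (n : ℕ∞) ∧ ∀ m : ℕ, m < n → ¬ x ≤ (m : ℕ∞) := by
  cases x with
  | top =>
    simp only [top_le_iff]
    constructor
    · intro h; exact absurd h (by simp)
    · rintro ⟨h, -⟩; exact absurd h (by simp)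
  | coe t =>
    simp only [Nat.cast_inj, Nat.cast_le]
    constructor
    · rintro rfl; exact ⟨le_rfl, fun m hmn => by omega⟩
    · rintro ⟨h1, h2⟩
      by_contra hne
      exact h2 t (by omega) le_rfl

lemma enat_toNat_eq (x : ℕ∞) (n : ℕ) :
    x.toNat = n ↔ (x = (n : ℕ∞) ∨ (x = ⊤ ∧ n = 0)) := by
  cases x with
  | top => simp [eq_comm]
  | coe t => simp [Nat.cast_inj]

lemma enat_coe_le_iff (x : ℕ∞) (k : ℕ) (hk : 1 ≤ k) :
    (k : ℕ∞) ≤ x ↔ ¬ (x ≤ ((k - 1 : ℕ) : ℕ∞)) := by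
  cases x with
  | top => simp
  | coe t =>
    simp only [Nat.cast_le]
    omega

include hm hρ hτ in
lemma tau_eq_coe_meas (n : ℕ) : MeasurableSet {ω | τ ω = (n : ℕ∞)} := by
  have h : {ω | τ ω = (n : ℕ∞)} =
      {ω | τ ω ≤ (n : ℕ∞)} ∩ ⋂ (m : ℕ) (_ : m < n), {ω | τ ω ≤ (m : ℕ∞)}ᶜ := by
    ext ω
    simp only [Set.mem_setOf_eq, Set.mem_inter_iff, Set.mem_iInter, Set.mem_compl_iff]
    rw [enat_eq_coe_iff]
  rw [h]
  exact (tau_le_meas_amb (hm := hm) hρ hτ n).inter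
    (MeasurableSet.iInter fun m => MeasurableSet.iInter fun _ =>
      (tau_le_meas_amb (hm := hm) hρ hτ m).compl)

include hm hρ hτ in
lemma tau_toNat_eq_meas (n : ℕ) : MeasurableSet {ω | (τ ω).toNat = n} := by
  have h : {ω | (τ ω).toNat = n} =
      {ω | τ ω = (n : ℕ∞)} ∪ (if n = 0 then {ω | τ ω = ⊤} else ∅) := by
    ext ω
    simp only [Set.mem_setOf_eq, Set.mem_union, enat_toNat_eq]
    split
    · next h0 => subst h0; simp
    · next h0 => simp [h0]
  rw [h]
  refine (tau_eq_coe_meas (hm := hm) hρ hτ n).union ?_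
  split
  · exact tau_eq_top_meas (hm := hm) hρ hτ
  · exact MeasurableSet.empty

include hm hρ hτ in
lemma stopVal_meas : Measurable (stopVal ξ τ) := by
  apply measurable_to_countable'
  intro z
  have h : stopVal ξ τ ⁻¹' {z} =
      ⋃ (n : ℕ), ({ω | (τ ω).toNat = n} ∩ walk ξ n ⁻¹' {z}) := by
    ext ω
    simp only [Set.mem_preimage, Set.mem_singleton_iff, Set.mem_iUnion, Set.mem_inter_iff,
      Set.mem_setOf_eq, stopVal]
    constructor
    · intro hz; exact ⟨(τ ω).toNat, rfl, hz⟩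
    · rintro ⟨n, h1, h2⟩; rw [h1]; exact h2
  rw [h]
  exact MeasurableSet.iUnion fun n => (tau_toNat_eq_meas (hm := hm) hρ hτ n).inter
    ((measurable_walk ξ hm n) (measurableSet_singleton _))

include hρ hτ in
lemma tau_indlt_meas {k n : ℕ} (hk1 : 1 ≤ k) (hk : k - 1 ≤ n) :
    MeasurableSet[natFilt ξ hm n] {ω | (k : ℕ∞) ≤ τ ω} := by
  have h : {ω | (k : ℕ∞) ≤ τ ω} = {ω | τ ω ≤ ((k - 1 : ℕ) : ℕ∞)}ᶜ := by
    ext ω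
    simp only [Set.mem_setOf_eq, Set.mem_compl_iff]
    exact enat_coe_le_iff (τ ω) k hk1
  rw [h]
  exact (tau_le_meas hρ hτ (by omega)).compl

lemma stopProc_repr (n : ℕ) (ω : Ω) :
    stopProc ξ τ n ω =
      ∑ k ∈ Finset.Icc 1 n, ((ξ k ω : ℤ) : ℝ) * (if (k : ℕ∞) ≤ τ ω then 1 else 0) := by
  rw [stopProc]
  cases hτω : τ ω with
  | top =>
    rw [min_eq_left le_top]
    have h1 : ∀ k ∈ Finset.Icc 1 n,
        ((ξ k ω : ℤ) : ℝ) * (if (k : ℕ∞) ≤ (⊤ : ℕ∞) then 1 else 0) = ((ξ k ω : ℤ) : ℝ) := by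
      intro k hk; rw [if_pos le_top, mul_one]
    rw [Finset.sum_congr rfl h1, walk]
    simp [ENat.toNat_coe]
  | coe t =>
    rw [show min (n : ℕ∞) (t : ℕ∞) = (n : ℕ∞) ⊓ (t : ℕ∞) from rfl, toNat_min_coe]
    have hsub : Finset.Icc 1 (min n t) ⊆ Finset.Icc 1 n :=
      Finset.Icc_subset_Icc le_rfl (min_le_left n t)
    rw [walk]
    push_cast
    rw [← Finset.sum_subset hsub ?_]
    · refine Finset.sum_congr rfl fun k hk => ?_
      rw [Finset.mem_Icc] at hk
      rw [if_pos (by exact_mod_cast le_trans hk.2 (min_le_right n t)), mul_one]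
    · intro k hk hk2
      rw [Finset.mem_Icc] at hk hk2
      rw [if_neg ?_, mul_zero]
      intro hc
      have : k ≤ t := by exact_mod_cast hc
      omega

include hρ hτ in
lemma stopProc_adapted : StronglyAdapted (natFilt ξ hm) (stopProc ξ τ) := by
  intro n
  have h : stopProc ξ τ n = fun ω =>
      ∑ k ∈ Finset.Icc 1 n, ((ξ k ω : ℤ) : ℝ) * (if (k : ℕ∞) ≤ τ ω then 1 else 0) :=
    funext (stopProc_repr n)
  rw [h]
  refine Measurable.stronglyMeasurable ?_
  refine Finset.measurable_sum _ fun k hk => ?_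
  rw [Finset.mem_Icc] at hk
  refine Measurable.mul ?_ ?_
  · exact measurable_from_top.comp (xi_meas_filt (hm := hm) hk.1 hk.2)
  · have h2 : (fun ω => if (k : ℕ∞) ≤ τ ω then (1 : ℝ) else 0) =
        Set.indicator {ω | (k : ℕ∞) ≤ τ ω} (fun _ => (1 : ℝ)) := by
      funext ω
      rw [Set.indicator_apply]
      rfl
    rw [h2]
    exact measurable_const.indicator (tau_indlt_meas hρ hτ hk.1 (by omega))

variable {W : IsSSRW P ξ}

include hρ hτ in
lemma ae_mem_U (W : IsSSRW P ξ) : ∀ᵐ ω ∂P, ω ∈ USet ξ := by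
  have h := Ucompl_null (P := P) W
  rw [ae_iff]
  exact h

include hρ hτ in
lemma stopProc_ae_bound (W : IsSSRW P ξ) :
    ∀ᵐ ω ∂P, ∀ n, |stopProc ξ τ n ω| ≤ 3 := by
  filter_upwards [ae_mem_U hρ hτ W] with ω hω n
  have hb : -3 ≤ walk ξ (min (n : ℕ∞) (τ ω)).toNat ω ∧
      walk ξ (min (n : ℕ∞) (τ ω)).toNat ω ≤ 3 := by
    rcases hω with (h2 | h0) | h3
    · rcases Set.mem_iUnion.1 h2 with ⟨m, hmem⟩
      exact (tauC hρ hτ (by omega) (by omega) hmem).2.2 n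
    · rcases Set.mem_iUnion.1 h0 with ⟨q, hmem⟩
      exact (tauE hρ hτ (by omega) (by omega) hmem).2.2 n
    · rcases Set.mem_iUnion.1 h3 with ⟨q, hmem⟩
      exact (tauE hρ hτ (by omega) (by omega) hmem).2.2 n
  rw [stopProc, abs_le]
  constructor <;> [exact_mod_cast hb.1; exact_mod_cast hb.2]

include hm hρ hτ in
lemma stopProc_sm (n : ℕ) : StronglyMeasurable (stopProc ξ τ n) :=
  (stopProc_adapted (hm := hm) hρ hτ n).mono ((natFilt ξ hm).le n)

include hm hρ hτ in
lemma stopProc_integrable (W : IsSSRW P ξ) (n : ℕ) :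
    Integrable (stopProc ξ τ n) P := by
  haveI := W.isProb
  refine Integrable.mono' (integrable_const (3 : ℝ))
    (stopProc_sm (hm := hm) hρ hτ n).aestronglyMeasurable ?_
  filter_upwards [stopProc_ae_bound hρ hτ W] with ω hω
  simpa [Real.norm_eq_abs] using hω n

include hρ hτ in
lemma tau_aefinite (W : IsSSRW P ξ) : ∀ᵐ ω ∂P, τ ω < ⊤ := by
  filter_upwards [ae_mem_U hρ hτ W] with ω hω
  rcases hω with (h2 | h0) | h3
  · rcases Set.mem_iUnion.1 h2 with ⟨m, hmem⟩
    rw [(tauC hρ hτ (by omega) (by omega) hmem).1]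
    exact WithTop.coe_lt_top _
  · rcases Set.mem_iUnion.1 h0 with ⟨q, hmem⟩
    rw [(tauE hρ hτ (by omega) (by omega) hmem).1]
    exact WithTop.coe_lt_top _
  · rcases Set.mem_iUnion.1 h3 with ⟨q, hmem⟩
    rw [(tauE hρ hτ (by omega) (by omega) hmem).1]
    exact WithTop.coe_lt_top _

include hρ hτ in
lemma U2_sub : U2Set ξ ⊆ stopVal ξ τ ⁻¹' {2} := by
  rintro ω h2
  rcases Set.mem_iUnion.1 h2 with ⟨m, hmem⟩
  exact (tauC hρ hτ (by omega) (by omega) hmem).2.1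

include hρ hτ in
lemma U0_sub : U0Set ξ ⊆ stopVal ξ τ ⁻¹' {0} := by
  rintro ω h0
  rcases Set.mem_iUnion.1 h0 with ⟨q, hmem⟩
  have := (tauE hρ hτ (by omega) (by omega) hmem).2.1
  rwa [if_pos (by omega)] at this

include hρ hτ in
lemma U3_sub : U3Set ξ ⊆ stopVal ξ τ ⁻¹' {-3} := by
  rintro ω h3
  rcases Set.mem_iUnion.1 h3 with ⟨q, hmem⟩
  have := (tauE hρ hτ (by omega) (by omega) hmem).2.1
  rwa [if_neg (by omega)] at this

lemma xi_indep_filt (W : IsSSRW P ξ) {n : ℕ} {A : Set Ω}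
    (hA : MeasurableSet[natFilt ξ W.meas n] A) (t : Set ℤ) :
    P (A ∩ ξ (n + 1) ⁻¹' t) = P A * P (ξ (n + 1) ⁻¹' t) := by
  have hle : natFilt ξ W.meas n ≤
      ⨆ i ∈ Set.Iic n, MeasurableSpace.comap (ξ i) inferInstance := by
    refine iSup₂_le fun k hk => ?_
    have hwm : Measurable[⨆ i ∈ Set.Iic n, MeasurableSpace.comap (ξ i) inferInstance]
        (walk ξ k) := by
      refine Finset.measurable_sum _ fun i hi => ?_
      have hiH : MeasurableSpace.comap (ξ i) inferInstance ≤
          ⨆ i ∈ Set.Iic n, MeasurableSpace.comap (ξ i) inferInstance := by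
        refine le_biSup (f := fun i => MeasurableSpace.comap (ξ i) inferInstance) ?_
        rw [Finset.mem_Icc] at hi
        exact le_trans hi.2 hk
      exact fun s hs => hiH _ ⟨s, hs, rfl⟩
    exact hwm.comap_le
  have h1 : iIndep (fun i => MeasurableSpace.comap (ξ i) inferInstance) P :=
    (iIndepFun_iff_iIndep _ _ _).1 W.indep
  have hindep : Indep (⨆ i ∈ Set.Iic n, MeasurableSpace.comap (ξ i) inferInstance)
      (MeasurableSpace.comap (ξ (n + 1)) inferInstance) P := by
    have h2 := indep_iSup_of_disjoint (m := fun i => MeasurableSpace.comap (ξ i) inferInstance)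
      (fun i => (W.meas i).comap_le) h1 (S := Set.Iic n) (T := {n + 1})
      (Set.disjoint_singleton_right.2 (by simp))
    simpa using h2
  exact (Indep_iff _ _ _).1 hindep A (ξ (n + 1) ⁻¹' t) (hle _ hA)
    ⟨t, MeasurableSpace.measurableSet_top, rfl⟩

lemma setIntegral_xi_zero (W : IsSSRW P ξ) {n : ℕ} {A : Set Ω}
    (hA : MeasurableSet[natFilt ξ W.meas n] A) :
    ∫ ω in A, ((ξ (n + 1) ω : ℤ) : ℝ) ∂P = 0 := by
  haveI := W.isProb
  set B1 := ξ (n + 1) ⁻¹' {1} with hB1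
  set B2 := ξ (n + 1) ⁻¹' {-1} with hB2
  have hB1m : MeasurableSet B1 := W.meas _ (measurableSet_singleton _)
  have hB2m : MeasurableSet B2 := W.meas _ (measurableSet_singleton _)
  have hdisj : Disjoint B1 B2 :=
    Disjoint.preimage _ (Set.disjoint_singleton.2 (by decide))
  have hunion : P (B1 ∪ B2) = 1 := by
    rw [measure_union hdisj hB2m, meas_step W (Or.inl rfl), meas_step W (Or.inr rfl)]
    exact ENNReal.add_halves 1
  have hfull : ∀ᵐ ω ∂P, ω ∈ B1 ∪ B2 := by
    rw [ae_iff]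
    have : {ω | ¬ ω ∈ B1 ∪ B2} = (B1 ∪ B2)ᶜ := rfl
    rw [this, measure_compl (hB1m.union hB2m) (by simp), hunion]
    simp
  have hAm : MeasurableSet A := (natFilt ξ W.meas).le n _ hA
  have hae : ∀ᵐ ω ∂P, ω ∈ A → ((ξ (n + 1) ω : ℤ) : ℝ) =
      Set.indicator B1 (fun _ => (1 : ℝ)) ω - Set.indicator B2 (fun _ => (1 : ℝ)) ω := by
    filter_upwards [hfull] with ω hω _
    rcases hω with h | h
    · have hv : ξ (n + 1) ω = 1 := h
      rw [Set.indicator_of_mem h, Set.indicator_of_notMem (fun hc => by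
        have : ξ (n + 1) ω = -1 := hc
        omega), hv]
      norm_num
    · have hv : ξ (n + 1) ω = -1 := h
      rw [Set.indicator_of_notMem (fun hc => by
        have : ξ (n + 1) ω = 1 := hc
        omega), Set.indicator_of_mem h, hv]
      norm_num
  rw [setIntegral_congr_ae hAm hae]
  have hint1 : IntegrableOn (Set.indicator B1 (fun _ => (1 : ℝ))) A P :=
    ((integrable_const (1 : ℝ)).indicator hB1m).integrableOn
  have hint2 : IntegrableOn (Set.indicator B2 (fun _ => (1 : ℝ))) A P :=
    ((integrable_const (1 : ℝ)).indicator hB2m).integrableOn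
  rw [integral_sub hint1 hint2, setIntegral_indicator hB1m, setIntegral_indicator hB2m,
    setIntegral_const, setIntegral_const]
  have h1 : P (A ∩ B1) = P A * (1 / 2) := by
    rw [hB1, xi_indep_filt W hA, meas_step W (Or.inl rfl)]
  have h2 : P (A ∩ B2) = P A * (1 / 2) := by
    rw [hB2, xi_indep_filt W hA, meas_step W (Or.inr rfl)]
  rw [measureReal_def, measureReal_def, h1, h2]
  simp

include hm hρ hτ in
lemma stopProc_martingale (W : IsSSRW P ξ) (hW : W.meas = hm) :
    Martingale (stopProc ξ τ) (natFilt ξ hm) P := by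
  haveI := W.isProb
  subst hW
  refine martingale_nat (stopProc_adapted hρ hτ) (stopProc_integrable (hm := W.meas) hρ hτ W)
    fun n => ?_
  refine ae_eq_condExp_of_forall_setIntegral_eq ((natFilt ξ W.meas).le n)
    (stopProc_integrable (hm := W.meas) hρ hτ W (n + 1))
    (fun s _ _ => (stopProc_integrable (hm := W.meas) hρ hτ W n).integrableOn)
    (fun s hsm hsf => ?_)
    ((stopProc_adapted hρ hτ n).aestronglyMeasurable)
  -- ∫ stopProc n over s = ∫ stopProc (n+1) over s
  set B := {ω | ((n + 1 : ℕ) : ℕ∞) ≤ τ ω} with hB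
  have hBfilt : MeasurableSet[natFilt ξ W.meas n] B :=
    tau_indlt_meas hρ hτ (by omega) (by omega)
  have hBamb : MeasurableSet B := (natFilt ξ W.meas).le n _ hBfilt
  have hsamb : MeasurableSet s := (natFilt ξ W.meas).le n _ hsm
  have hdiff : ∀ ω, stopProc ξ τ (n + 1) ω = stopProc ξ τ n ω +
      Set.indicator B (fun ω' => ((ξ (n + 1) ω' : ℤ) : ℝ)) ω := by
    intro ω
    rw [stopProc_repr, stopProc_repr, Finset.sum_Icc_succ_top (by omega)]
    congr 1
    rw [Set.indicator_apply]
    split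
    · next h => rw [mul_one, if_pos (show ω ∈ B from h)]
    · next h => rw [mul_zero, if_neg (show ω ∉ B from h)]
  have hgint : Integrable (Set.indicator B (fun ω' => ((ξ (n + 1) ω' : ℤ) : ℝ))) P := by
    refine Integrable.indicator ?_ hBamb
    refine Integrable.mono' (integrable_const (1 : ℝ))
      (measurable_from_top.comp (W.meas (n + 1))).aestronglyMeasurable ?_
    filter_upwards [gsteps_pm W] with ω hω
    have := hω (n + 1)
    rw [Real.norm_eq_abs]
    rcases this with h | h <;> rw [h] <;> norm_num
  have h1 : ∫ ω in s, stopProc ξ τ (n + 1) ω ∂P =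
      ∫ ω in s, stopProc ξ τ n ω ∂P +
        ∫ ω in s, Set.indicator B (fun ω' => ((ξ (n + 1) ω' : ℤ) : ℝ)) ω ∂P := by
    rw [← integral_add ((stopProc_integrable (hm := W.meas) hρ hτ W n).integrableOn)
      hgint.integrableOn]
    exact setIntegral_congr_fun hsamb fun ω _ => hdiff ω
  rw [h1, setIntegral_indicator hBamb,
    setIntegral_xi_zero W (hsm.inter hBfilt), add_zero]

include hm hρ hτ in
lemma stopProc_ui (W : IsSSRW P ξ) : UniformIntegrable (stopProc ξ τ) 1 P := by
  haveI := W.isProb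
  refine uniformIntegrable_of le_rfl ENNReal.one_ne_top
    (fun i => (stopProc_sm (hm := hm) hρ hτ i).aestronglyMeasurable) fun ε hε => ?_
  refine ⟨4, fun i => ?_⟩
  have h0 : {x | (4 : ℝ≥0) ≤ ‖stopProc ξ τ i x‖₊}.indicator (stopProc ξ τ i) =ᵐ[P]
      (0 : Ω → ℝ) := by
    filter_upwards [stopProc_ae_bound hρ hτ W] with ω hω
    rw [Set.indicator_of_notMem]
    · rfl
    · intro hc
      have h4 : (4 : ℝ) ≤ |stopProc ξ τ i ω| := by
        have := hc
        simp only [Set.mem_setOf_eq] at this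
        have h5 : ((4 : ℝ≥0) : ℝ) ≤ (‖stopProc ξ τ i ω‖₊ : ℝ) := by exact_mod_cast this
        simpa [Real.norm_eq_abs] using h5
      have := hω i
      linarith
  rw [eLpNorm_congr_ae h0, eLpNorm_zero]
  exact zero_le

open scoped Classical in
lemma preim_inter_eq {f : Ω → ℤ} {A : Set Ω} {v : ℤ} (hsub : A ⊆ f ⁻¹' {v}) (s : Set ℤ) :
    f ⁻¹' s ∩ A = if v ∈ s then A else ∅ := by
  split
  · next hv =>
    ext ω
    refine ⟨fun h => h.2, fun hA => ⟨?_, hA⟩⟩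
    have hfv : f ω = v := hsub hA
    rw [Set.mem_preimage, hfv]
    exact hv
  · next hv =>
    ext ω
    simp only [Set.mem_inter_iff, Set.mem_preimage, Set.mem_empty_iff_false, iff_false]
    rintro ⟨hfs, hA⟩
    have hfv : f ω = v := hsub hA
    rw [hfv] at hfs
    exact hv hfs

include hm hρ hτ in
lemma embeds (W : IsSSRW P ξ) (μ : Measure ℤ)
    (hμ : μ = (2 / 9 : ℝ≥0∞) • Measure.dirac (-3 : ℤ) +
      (4 / 9 : ℝ≥0∞) • Measure.dirac (0 : ℤ) + (1 / 3 : ℝ≥0∞) • Measure.dirac (2 : ℤ)) :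
    Measure.map (stopVal ξ τ) P = μ := by
  haveI := W.isProb
  refine Measure.ext fun s hs => ?_
  rw [Measure.map_apply (stopVal_meas (hm := hm) hρ hτ) hs, hμ]
  set X := stopVal ξ τ ⁻¹' s with hX
  have hXm : MeasurableSet X := stopVal_meas (hm := hm) hρ hτ hs
  have hPX : P X = P (X ∩ U2Set ξ) + P (X ∩ U0Set ξ) + P (X ∩ U3Set ξ) := by
    have h1 : P (X ∩ USet ξ) + P (X \ USet ξ) = P X := measure_inter_add_diff X (U_meas W)
    have h2 : P (X \ USet ξ) = 0 :=
      measure_mono_null (fun ω hω => hω.2) (Ucompl_null W)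
    have h3 : X ∩ USet ξ = (X ∩ U2Set ξ) ∪ (X ∩ U0Set ξ) ∪ (X ∩ U3Set ξ) := by
      rw [USet, Set.inter_union_distrib_left, Set.inter_union_distrib_left]
    have h4 : P (X ∩ USet ξ) = P (X ∩ U2Set ξ) + P (X ∩ U0Set ξ) + P (X ∩ U3Set ξ) := by
      rw [h3, measure_union ?_ (hXm.inter (U3_meas W)), measure_union ?_ (hXm.inter (U0_meas W))]
      · exact (disj_U2_U0.mono Set.inter_subset_right Set.inter_subset_right)
      · refine Disjoint.union_left ?_ ?_
        · exact disj_U2_U3.mono Set.inter_subset_right Set.inter_subset_right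
        · exact disj_U0_U3.mono Set.inter_subset_right Set.inter_subset_right
    rw [← h1, h2, add_zero]
    exact h4
  rw [hPX, preim_inter_eq (U2_sub hρ hτ) s, preim_inter_eq (U0_sub hρ hτ) s,
    preim_inter_eq (U3_sub hρ hτ) s]
  simp only [Measure.coe_add, Measure.coe_smul, Pi.add_apply, Pi.smul_apply, smul_eq_mul,
    Measure.dirac_apply' _ hs]
  by_cases h2 : (2 : ℤ) ∈ s <;> by_cases h0 : (0 : ℤ) ∈ s <;> by_cases h3 : (-3 : ℤ) ∈ s <;>
    simp [Set.indicator_apply, h2, h0, h3, measure_empty,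
      U2_measure W, U0_measure W, U3_measure W] <;>
    try ring

end Filt


end AuxRW

/-- The measure `μ = (2/9)δ₋₃ + (4/9)δ₀ + (1/3)δ₂` is embedded by the
Chacon–Walsh stopping time `τ = inf {n ≥ ρ : X n ∉ (-3,0)}`, where
`ρ = inf {n : X n ∉ (-1,2)}`; the stopped process is a UI martingale, although the
barycentre value `Ψ_μ(0) = 6/7` is not an integer. -/
theorem chacon_walsh_but_not_azema_yor_example
    {Ω : Type*} [MeasurableSpace Ω] (P : Measure Ω) (ξ : ℕ → Ω → ℤ)
    (W : IsSSRW P ξ) (μ : Measure ℤ)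
    (hμ : μ = (2 / 9 : ℝ≥0∞) • Measure.dirac (-3 : ℤ) +
      (4 / 9 : ℝ≥0∞) • Measure.dirac (0 : ℤ) + (1 / 3 : ℝ≥0∞) • Measure.dirac (2 : ℤ))
    (ρ : Ω → ℕ∞)
    (hρ : ρ = fun ω => ⨅ (n : ℕ) (_ : walk ξ n ω ∉ Set.Ioo (-1 : ℤ) 2), (n : ℕ∞))
    (τ : Ω → ℕ∞)
    (hτ : τ = fun ω => ⨅ (n : ℕ)
      (_ : ρ ω ≤ (n : ℕ∞) ∧ walk ξ n ω ∉ Set.Ioo (-3 : ℤ) 0), (n : ℕ∞)) :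
    AEFinite P τ ∧ Embeds P ξ τ μ ∧
      Martingale (stopProc ξ τ) (natFilt ξ W.meas) P ∧
      UniformIntegrable (stopProc ξ τ) 1 P ∧
      (∑' n : ℕ, (n : ℝ) * (μ {(n : ℤ)}).toReal) / (μ {n : ℤ | 0 ≤ n}).toReal = 6 / 7 ∧
      ¬ ∃ m : ℤ, ((6 : ℝ) / 7) = (m : ℝ) := by
  refine ⟨tau_aefinite hρ hτ W, embeds (hm := W.meas) hρ hτ W μ hμ,
    stopProc_martingale hρ hτ W rfl, stopProc_ui (hm := W.meas) hρ hτ W, ?_, ?_⟩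
  · -- barycentre computation
    have hsing : ∀ z : ℤ, μ {z} =
        (2 / 9 : ℝ≥0∞) * (if (-3 : ℤ) = z then 1 else 0) +
        (4 / 9 : ℝ≥0∞) * (if (0 : ℤ) = z then 1 else 0) +
        (1 / 3 : ℝ≥0∞) * (if (2 : ℤ) = z then 1 else 0) := by
      intro z
      rw [hμ]
      simp only [Measure.coe_add, Measure.coe_smul, Pi.add_apply, Pi.smul_apply, smul_eq_mul,
        Measure.dirac_apply' _ (measurableSet_singleton z), Set.indicator_apply,
        Set.mem_singleton_iff, Pi.one_apply]
    have h2 : μ {(2 : ℤ)} = 1 / 3 := by rw [hsing]; norm_num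
    have hnum : (∑' n : ℕ, (n : ℝ) * (μ {(n : ℤ)}).toReal) = 2 / 3 := by
      rw [tsum_eq_single 2 ?_]
      · rw [show ((2 : ℕ) : ℤ) = (2 : ℤ) by norm_num, h2]
        simp [ENNReal.toReal_div]
        norm_num
      · intro n hn
        rcases Nat.eq_zero_or_pos n with h0 | hpos
        · subst h0; simp
        · have hz : μ {(n : ℤ)} = 0 := by
            rw [hsing]
            rw [if_neg (by omega), if_neg (by omega), if_neg (by omega)]
            simp
          rw [hz]
          simp
    have hden : μ {n : ℤ | 0 ≤ n} = 7 / 9 := by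
      rw [hμ]
      have hms : MeasurableSet {n : ℤ | 0 ≤ n} := trivial
      simp only [Measure.coe_add, Measure.coe_smul, Pi.add_apply, Pi.smul_apply, smul_eq_mul,
        Measure.dirac_apply' _ hms, Set.indicator_apply, Set.mem_setOf_eq, Pi.one_apply]
      norm_num
      apply etr (by simp [ENNReal.add_ne_top, dnt]) (dnt (by norm_num) (by norm_num))
      rw [ENNReal.toReal_add (dnt (by norm_num) (by norm_num)) (by simp)]
      rw [ENNReal.toReal_inv]
      simp [ENNReal.toReal_div] <;> norm_num
    rw [hnum, hden]
    rw [show ((7 : ℝ≥0∞) / 9).toReal = 7 / 9 by simp [ENNReal.toReal_div]]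
    norm_num
  · rintro ⟨m, hmeq⟩
    have h7 : (6 : ℝ) = 7 * (m : ℝ) := by
      field_simp at hmeq
      linarith
    have h8 : (6 : ℤ) = 7 * m := by exact_mod_cast h7
    omega


end RWSkorokhod
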